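/- arXiv:2403.07831 — 2 statements merged into one kernel-verified Lean document; each statement's English description precedes it below -/
import Mathlib

section
/- In the water filling algorithm with fixed order, the returned loads {q_c} satisfy Σ_c q_c ≥ q^in whenever min_c q_c⁻ ≤ q^in ≤ Σ_c q_c⁺: formally, if compressors c_1,…,c_m with 0 < q_i⁻ ≤ q_i⁺ are filled greedily to full capacity in order until the cumulative capacity exceeds q^in, and then trimmed back in reverse order (each active compressor reduced by at most q_i⁺ − q_i⁻, never below q_i⁻, and only while the running total exceeds q^in), the final total Σ q_i is at least q^in. -/
/-- First loop of the water filling algorithm: fill compressors to full capacity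
in order while the remaining needed load is positive. -/
noncomputable def fillPhase : List (ℝ × ℝ) → ℝ → List ℝ
  | [], _ => []
  | (_, qM) :: rest, need =>
      if 0 < need then qM :: fillPhase rest (need - qM)
      else 0 :: fillPhase rest need

/-- Second loop of the water filling algorithm, run on the reversed list of
(compressor, assigned load) pairs: while there is surplus, trim each active
compressor back by at most `q⁺ − q⁻`. -/
noncomputable def trimPhase : List ((ℝ × ℝ) × ℝ) → ℝ → List ℝ
  | [], _ => []
  | pq :: rest, s =>
      if 0 ≤ s ∧ pq.2 ≠ 0 then
        (pq.2 - min (pq.1.2 - pq.1.1) s) ::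
          trimPhase rest (s - min (pq.1.2 - pq.1.1) s)
      else pq.2 :: trimPhase rest s

/-- The water filling algorithm (Algorithm 1): greedy fill in order, then trim
in reverse order. -/
noncomputable def waterFill (comps : List (ℝ × ℝ)) (qin : ℝ) : List ℝ :=
  let q1 := fillPhase comps qin
  (trimPhase ((comps.zip q1).reverse) (q1.sum - qin)).reverse

lemma fillPhase_length (l : List (ℝ × ℝ)) (need : ℝ) :
    (fillPhase l need).length = l.length := by
  induction l generalizing need with
  | nil => simp [fillPhase]
  | cons a rest ih =>
    obtain ⟨_, qM⟩ := a
    by_cases h : 0 < need <;> simp [fillPhase, h, ih]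

lemma fillPhase_sum_ge (l : List (ℝ × ℝ)) (need : ℝ)
    (h : need ≤ (l.map Prod.snd).sum) : need ≤ (fillPhase l need).sum := by
  induction l generalizing need with
  | nil => simpa [fillPhase] using h
  | cons a rest ih =>
    obtain ⟨qm, qM⟩ := a
    by_cases hp : 0 < need
    · have := ih (need - qM) (by simp at h; linarith)
      simp [fillPhase, hp]
      linarith
    · have hz : need ≤ 0 := le_of_not_gt hp
      have hnonneg : ∀ m : List (ℝ × ℝ), 0 ≤ (fillPhase m need).sum := by
        intro m
        induction m with
        | nil => simp [fillPhase]
        | cons b r ihb =>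
          obtain ⟨_, bM⟩ := b
          simp [fillPhase, not_lt.mpr hz]
          linarith
      simp [fillPhase, hp]
      linarith [hnonneg rest]

lemma trimPhase_sum_ge (l : List ((ℝ × ℝ) × ℝ)) (s : ℝ) (hs : 0 ≤ s) :
    (l.map Prod.snd).sum - s ≤ (trimPhase l s).sum := by
  induction l generalizing s with
  | nil => simpa [trimPhase] using hs
  | cons pq rest ih =>
    by_cases h : 0 ≤ s ∧ pq.2 ≠ 0
    · have ht : min (pq.1.2 - pq.1.1) s ≤ s := min_le_right _ _
      have := ih (s - min (pq.1.2 - pq.1.1) s) (by linarith)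
      simp [trimPhase, h]
      linarith
    · have := ih s hs
      simp [trimPhase, h]
      linarith

/-- The water filling algorithm returns loads whose total is at least `q^in`,
whenever `min_i q_i⁻ ≤ q^in ≤ Σ_i q_i⁺`. -/
theorem stmt_13 (comps : List (ℝ × ℝ)) (qin : ℝ)
    (hcap : ∀ p ∈ comps, 0 < p.1 ∧ p.1 ≤ p.2)
    (hlow : ∃ p ∈ comps, p.1 ≤ qin)
    (hhigh : qin ≤ (comps.map Prod.snd).sum) :
    qin ≤ (waterFill comps qin).sum := by
  set q1 := fillPhase comps qin with hq1
  have hlen : q1.length = comps.length := fillPhase_length _ _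
  have hq1sum : qin ≤ q1.sum := fillPhase_sum_ge _ _ hhigh
  have hzip : ((comps.zip q1).map Prod.snd) = q1 :=
    List.map_snd_zip hlen.le
  have hs : 0 ≤ q1.sum - qin := by linarith
  have := trimPhase_sum_ge ((comps.zip q1).reverse) (q1.sum - qin) hs
  rw [List.map_reverse, List.sum_reverse, hzip] at this
  unfold waterFill
  rw [List.sum_reverse]
  linarith
end

section
/- In the water filling algorithm output, at most one compressor is in trim: all returned loads q_i satisfy q_i ∈ {0, q_i⁻, q_i⁺} except possibly one index j where q_j⁻ ≤ q_j ≤ q_j⁺. -/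
lemma fill_len (comps : List (ℝ × ℝ)) (need : ℝ) :
    (fillPhase comps need).length = comps.length := by
  induction comps generalizing need with
  | nil => simp [fillPhase]
  | cons a rest ih =>
    obtain ⟨qm, qM⟩ := a
    simp only [fillPhase]
    split <;> simp [ih]

lemma fill_mem (comps : List (ℝ × ℝ)) (need : ℝ) :
    ∀ pq ∈ comps.zip (fillPhase comps need), pq.2 = 0 ∨ pq.2 = pq.1.2 := by
  induction comps generalizing need with
  | nil => simp
  | cons a rest ih =>
    obtain ⟨qm, qM⟩ := a
    simp only [fillPhase]
    split
    · rintro pq hpq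
      simp only [List.zip_cons_cons, List.mem_cons] at hpq
      rcases hpq with h | h
      · subst h; right; rfl
      · exact ih _ _ h
    · rintro pq hpq
      simp only [List.zip_cons_cons, List.mem_cons] at hpq
      rcases hpq with h | h
      · subst h; left; rfl
      · exact ih _ _ h

lemma trim_len (l : List ((ℝ × ℝ) × ℝ)) (s : ℝ) :
    (trimPhase l s).length = l.length := by
  induction l generalizing s with
  | nil => simp [trimPhase]
  | cons pq rest ih =>
    simp only [trimPhase]
    split <;> simp [ih]

lemma trim_zero (l : List ((ℝ × ℝ) × ℝ)) (h : ∀ pq ∈ l, pq.1.1 ≤ pq.1.2) :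
    trimPhase l 0 = l.map (·.2) := by
  induction l with
  | nil => simp [trimPhase]
  | cons pq rest ih =>
    have h0 : pq.1.1 ≤ pq.1.2 := h pq (List.mem_cons_self ..)
    have ih' := ih (fun p hp => h p (List.mem_cons_of_mem _ hp))
    simp only [trimPhase]
    split
    · have : min (pq.1.2 - pq.1.1) (0:ℝ) = 0 := by
        rw [min_eq_right]; linarith
      simp [this, ih']
    · simp [ih']

lemma trim_main (l : List ((ℝ × ℝ) × ℝ)) (s : ℝ)
    (h : ∀ pq ∈ l, pq.1.1 ≤ pq.1.2 ∧ (pq.2 = 0 ∨ pq.2 = pq.1.2)) :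
    ∃ j : ℕ, ∀ i (hi : i < l.length) (hi' : i < (trimPhase l s).length),
      (i ≠ j → (trimPhase l s)[i] = 0 ∨ (trimPhase l s)[i] = l[i].1.1 ∨
        (trimPhase l s)[i] = l[i].1.2) ∧
      (i = j → l[i].1.1 ≤ (trimPhase l s)[i] ∧ (trimPhase l s)[i] ≤ l[i].1.2) := by
  induction l generalizing s with
  | nil => exact ⟨0, by simp⟩
  | cons pq rest ih =>
    have h0 := h pq (List.mem_cons_self ..)
    have hrest : ∀ p ∈ rest, p.1.1 ≤ p.1.2 ∧ (p.2 = 0 ∨ p.2 = p.1.2) :=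
      fun p hp => h p (List.mem_cons_of_mem _ hp)
    by_cases hc : 0 ≤ s ∧ pq.2 ≠ 0
    · have hfull : pq.2 = pq.1.2 := h0.2.resolve_left hc.2
      rcases le_total (pq.1.2 - pq.1.1) s with hds | hsd
      · -- full trim: head becomes pq.1.1
        have hmin : min (pq.1.2 - pq.1.1) s = pq.1.2 - pq.1.1 := min_eq_left hds
        obtain ⟨j, hj⟩ := ih (s - (pq.1.2 - pq.1.1)) hrest
        refine ⟨j + 1, ?_⟩
        intro i hi hi'
        simp only [trimPhase, if_pos hc, hmin] at hi' ⊢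
        match i with
        | 0 =>
          constructor
          · intro _; right; left
            simp [hfull]
          · intro hij; omega
        | Nat.succ k =>
          simp only [List.getElem_cons_succ]
          simp only [List.length_cons, Nat.succ_lt_succ_iff] at hi hi'
          have := hj k hi hi'
          constructor
          · intro hne; exact this.1 (by omega)
          · intro heq; exact this.2 (by omega)
      · -- partial trim: head in [q⁻, q⁺], surplus becomes 0
        have hmin : min (pq.1.2 - pq.1.1) s = s := min_eq_right hsd
        have hzero : trimPhase rest (s - s) = rest.map (·.2) := by
          rw [sub_self]
          exact trim_zero rest (fun p hp => (hrest p hp).1)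
        refine ⟨0, ?_⟩
        intro i hi hi'
        simp only [trimPhase, if_pos hc, hmin, hzero] at hi' ⊢
        match i with
        | 0 =>
          constructor
          · intro hne; exact absurd rfl hne
          · intro _
            simp only [List.getElem_cons_zero, hfull]
            constructor <;> [linarith [hc.1, hsd]; linarith [hc.1]]
        | Nat.succ k =>
          simp only [List.length_cons, Nat.succ_lt_succ_iff, List.length_map] at hi hi'
          constructor
          · intro _
            simp only [List.getElem_cons_succ, List.getElem_map]
            rcases (hrest rest[k] (List.getElem_mem _)).2 with h' | h'
            · left; exact h'
            · right; right; exact h'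
          · intro heq; omega
    · obtain ⟨j, hj⟩ := ih s hrest
      refine ⟨j + 1, ?_⟩
      intro i hi hi'
      simp only [trimPhase, if_neg hc] at hi' ⊢
      match i with
      | 0 =>
        constructor
        · intro _
          simp only [List.getElem_cons_zero]
          rcases h0.2 with h' | h'
          · left; exact h'
          · right; right; exact h'
        · intro hij; omega
      | Nat.succ k =>
        simp only [List.getElem_cons_succ]
        simp only [List.length_cons, Nat.succ_lt_succ_iff] at hi hi'
        have := hj k hi hi'
        constructor
        · intro hne; exact this.1 (by omega)
        · intro heq; exact this.2 (by omega)


/-- In the water filling algorithm output, at most one compressor is in trim: all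
loads are in `{0, q_i⁻, q_i⁺}` except possibly one index `j`,
where `q_j⁻ ≤ q_j ≤ q_j⁺` (or `q_j = 0`). -/
theorem stmt_14 (comps : List (ℝ × ℝ)) (qin : ℝ)
    (hcap : ∀ p ∈ comps, 0 < p.1 ∧ p.1 ≤ p.2)
    (hlow : ∃ p ∈ comps, p.1 ≤ qin)
    (hhigh : qin ≤ (comps.map Prod.snd).sum) :
    ∃ j : ℕ,
      (∀ i (h1 : i < comps.length) (h2 : i < (waterFill comps qin).length),
        i ≠ j →
          (waterFill comps qin)[i] = 0 ∨
          (waterFill comps qin)[i] = comps[i].1 ∨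
          (waterFill comps qin)[i] = comps[i].2) ∧
      (∀ (h1 : j < comps.length) (h2 : j < (waterFill comps qin).length),
        (waterFill comps qin)[j] = 0 ∨
        (comps[j].1 ≤ (waterFill comps qin)[j] ∧
          (waterFill comps qin)[j] ≤ comps[j].2)) := by
  classical
  set n := comps.length with hn
  set q1 := fillPhase comps qin with hq1
  set l := (comps.zip q1).reverse with hl
  set s := q1.sum - qin with hs
  have hq1len : q1.length = n := fill_len comps qin
  have hziplen : (comps.zip q1).length = n := by
    simp [List.length_zip, hq1len]
    exact hn.le
  have hllen : l.length = n := by simp [hl, hziplen]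
  have houtlen : (trimPhase l s).length = n := by rw [trim_len, hllen]
  have hwf : waterFill comps qin = (trimPhase l s).reverse := rfl
  have hwflen : (waterFill comps qin).length = n := by
    rw [hwf, List.length_reverse, houtlen]
  have hmem : ∀ pq ∈ l, pq.1.1 ≤ pq.1.2 ∧ (pq.2 = 0 ∨ pq.2 = pq.1.2) := by
    intro pq hpq
    rw [hl, List.mem_reverse] at hpq
    have h1 := (List.of_mem_zip hpq).1
    exact ⟨(hcap pq.1 h1).2, fill_mem comps qin pq hpq⟩
  obtain ⟨j, hj⟩ := trim_main l s hmem
  -- index correspondence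
  have hidx : ∀ i (hi : i < n),
      (waterFill comps qin)[i]'(by omega) = (trimPhase l s)[n - 1 - i]'(by omega) ∧
      l[n - 1 - i]'(by omega) = (comps[i]'(by omega), q1[i]'(by omega)) := by
    intro i hi
    constructor
    · simp only [hwf, List.getElem_reverse, houtlen]
    · have hii : (comps.zip q1).length - 1 - (n - 1 - i) = i := by
        rw [hziplen]; omega
      simp only [hl, List.getElem_reverse, hii]
      exact List.getElem_zip
  refine ⟨if j < n then n - 1 - j else n, ?_, ?_⟩
  · intro i h1 h2 hne
    have hi : i < n := h1
    obtain ⟨hw, hzl⟩ := hidx i hi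
    have hkne : n - 1 - i ≠ j := by
      by_cases hjn : j < n
      · simp only [if_pos hjn] at hne; omega
      · omega
    have := (hj (n - 1 - i) (by omega) (by omega)).1 hkne
    rw [hw]
    rcases this with h' | h' | h'
    · left; exact h'
    · right; left; rw [h', hzl]
    · right; right; rw [h', hzl]
  · intro h1 h2
    by_cases hjn : j < n
    · simp only [if_pos hjn] at h1 h2 ⊢
      obtain ⟨hw, hzl⟩ := hidx (n - 1 - j) (by omega)
      have hkj : n - 1 - (n - 1 - j) = j := by omega
      simp only [hkj] at hw hzl
      have := (hj j (by omega) (by omega)).2 rfl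
      right
      rw [hw]
      rw [hzl] at this
      exact this
    · simp only [if_neg hjn] at h1
      omega
end
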